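/- Euler-type decomposition consequence: for every M ∈ Sp(2n,ℝ) there exists N ∈ Sp(2n,ℝ) of the form N = [[D,0],[0,D⁻¹]]·V with D positive diagonal of order n and V both real orthogonal and symplectic, such that MᵀM = NᵀN. -/

import Mathlib

open Matrix
open scoped ComplexOrder

noncomputable section

/-- The standard symplectic form matrix J = [[0, -I],[I, 0]] of order 2n. -/
def sympJ (n : ℕ) : Matrix (Fin n ⊕ Fin n) (Fin n ⊕ Fin n) ℝ :=
  Matrix.fromBlocks 0 (-1) 1 0

/-- A real 2n×2n matrix L is symplectic if Lᵀ J L = J. -/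
def IsSymplectic {n : ℕ} (L : Matrix (Fin n ⊕ Fin n) (Fin n ⊕ Fin n) ℝ) : Prop :=
  Lᵀ * sympJ n * L = sympJ n

/-- The convex set K_n of Gaussian covariance matrices:
real symmetric S of order 2n with 2S - iJ positive semidefinite (as a complex matrix). -/
def Kset (n : ℕ) : Set (Matrix (Fin n ⊕ Fin n) (Fin n ⊕ Fin n) ℝ) :=
  {S | S.IsSymm ∧
    ((2 : ℂ) • S.map (Complex.ofReal) - Complex.I • (sympJ n).map (Complex.ofReal)).PosSemidef}

open scoped RealInnerProductSpace
open Module Submodule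

/-- Abstract key lemma: given a symmetric positive-definite operator `p` and a
skew orthogonal complex structure `k` with `p ∘ k ∘ p = k`, every subspace invariant
under both admits an orthonormal family `x i` of eigenvectors of `p` with positive
eigenvalues such that additionally `⟪x i, k (x j)⟫ = 0` for all `i j`, and the family
together with its `k`-image doubles to the dimension of the subspace. -/
lemma euler_aux {E : Type*} [NormedAddCommGroup E] [InnerProductSpace ℝ E]
    [FiniteDimensional ℝ E] (p k : E →ₗ[ℝ] E)
    (hp : ∀ u v : E, ⟪p u, v⟫ = ⟪u, p v⟫)
    (hppos : ∀ v : E, v ≠ 0 → 0 < ⟪v, p v⟫)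
    (hk : ∀ u v : E, ⟪k u, v⟫ = -⟪u, k v⟫)
    (hkk : ∀ v : E, k (k v) = -v)
    (hpkp : ∀ v : E, p (k (p v)) = k v) :
    ∀ (d : ℕ) (U : Submodule ℝ E), finrank ℝ U = d →
      (∀ v ∈ U, p v ∈ U) → (∀ v ∈ U, k v ∈ U) →
      ∃ (m : ℕ) (x : Fin m → E) (μ : Fin m → ℝ), d = 2 * m ∧
        (∀ i, x i ∈ U) ∧ (∀ i, 0 < μ i) ∧ (∀ i, p (x i) = μ i • x i) ∧
        (∀ i j, ⟪x i, x j⟫ = if i = j then 1 else 0) ∧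
        (∀ i j, ⟪x i, k (x j)⟫ = 0) := by
  intro d
  induction d using Nat.strong_induction_on with
  | _ d ih =>
  intro U hU hUp hUk
  by_cases hd : d = 0
  · exact ⟨0, fun i => i.elim0, fun i => i.elim0, by omega, fun i => i.elim0,
      fun i => i.elim0, fun i => i.elim0, fun i => i.elim0, fun i => i.elim0⟩
  have hdpos : 0 < d := Nat.pos_of_ne_zero hd
  set pU : U →ₗ[ℝ] U := p.restrict hUp with hpU
  have hsymU : pU.IsSymmetric := by
    intro u v
    rw [Submodule.coe_inner, Submodule.coe_inner]
    show ⟪(p.restrict hUp u : E), (v : E)⟫ = ⟪(u : E), (p.restrict hUp v : E)⟫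
    rw [LinearMap.restrict_coe_apply, LinearMap.restrict_coe_apply]
    exact hp _ _
  set b := hsymU.eigenvectorBasis hU with hb
  set i0 : Fin d := ⟨0, hdpos⟩
  set μ0 : ℝ := hsymU.eigenvalues hU i0 with hμ0
  set x0 : E := ↑(b i0) with hx0
  have heig0 : p x0 = μ0 • x0 := by
    have h := hsymU.apply_eigenvectorBasis hU i0
    have h2 := congrArg (Subtype.val) h
    rw [← hb] at h2
    simpa [hpU, LinearMap.restrict_coe_apply] using h2
  have hx0U : x0 ∈ U := (b i0).2
  have hnorm : ⟪x0, x0⟫ = 1 := by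
    have h1 : ‖b i0‖ = 1 := b.orthonormal.1 i0
    have : ‖x0‖ = 1 := h1
    rw [real_inner_self_eq_norm_sq, this]; norm_num
  have hx0ne : x0 ≠ 0 := by
    intro h; rw [h] at hnorm; simp at hnorm
  have hμpos : 0 < μ0 := by
    have h := hppos x0 hx0ne
    rw [heig0, real_inner_smul_right, hnorm, mul_one] at h
    exact h
  set y0 : E := k x0 with hy0
  have hy0U : y0 ∈ U := hUk _ hx0U
  have hxy : ⟪x0, y0⟫ = 0 := by
    have h1 := hk x0 x0
    have h2 : ⟪k x0, x0⟫ = ⟪x0, k x0⟫ := real_inner_comm _ _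
    rw [h2] at h1
    linarith
  have hyy : ⟪y0, y0⟫ = 1 := by
    have h := hk x0 y0
    rw [hy0, hkk, inner_neg_right, neg_neg, hnorm] at h
    simpa using h
  have hpy : p y0 = μ0⁻¹ • y0 := by
    have h := hpkp x0
    rw [heig0, k.map_smul, p.map_smul] at h
    have h2 : p y0 = μ0⁻¹ • (μ0 • p y0) := by
      rw [smul_smul, inv_mul_cancel₀ hμpos.ne', one_smul]
    rw [h2, h]
  set W : Submodule ℝ E := Submodule.span ℝ ({x0, y0} : Set E) with hW
  have hWU : W ≤ U := by
    rw [Submodule.span_le]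
    rintro v (rfl | rfl)
    · exact hx0U
    · exact hy0U
  have horthpair : Orthonormal ℝ (![x0, y0]) := by
    rw [orthonormal_iff_ite]
    intro i j
    fin_cases i <;> fin_cases j
    · simpa using hnorm
    · simpa using hxy
    · simpa [real_inner_comm x0 y0] using hxy
    · simpa using hyy
  have hWrank : finrank ℝ W = 2 := by
    have hli := horthpair.linearIndependent
    have hrange : Set.range ![x0, y0] = {x0, y0} := by
      ext v
      simp [Fin.exists_fin_two]
      tauto
    have : W = Submodule.span ℝ (Set.range ![x0, y0]) := by rw [hrange]
    rw [this, finrank_span_eq_card hli, Fintype.card_fin]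
  have hd2 : 2 ≤ d := by
    have := Submodule.finrank_mono hWU
    rw [hWrank, hU] at this
    exact this
  set U' : Submodule ℝ E := Wᗮ ⊓ U with hU'
  have hU'rank : finrank ℝ U' = d - 2 :=
    Submodule.finrank_add_inf_finrank_orthogonal' hWU (by rw [hWrank, hU]; omega)
  have hmemU' : ∀ v : E, v ∈ U → ⟪x0, v⟫ = 0 → ⟪y0, v⟫ = 0 → v ∈ U' := by
    intro v hvU h1 h2
    refine Submodule.mem_inf.mpr ⟨?_, hvU⟩
    rw [Submodule.mem_orthogonal]
    intro u hu
    rcases Submodule.mem_span_pair.mp hu with ⟨a, c, rfl⟩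
    simp [inner_add_left, real_inner_smul_left, h1, h2]
  have hU'sub : ∀ v ∈ U', v ∈ U ∧ ⟪x0, v⟫ = 0 ∧ ⟪y0, v⟫ = 0 := by
    intro v hv
    obtain ⟨hvW, hvU⟩ := Submodule.mem_inf.mp hv
    rw [Submodule.mem_orthogonal] at hvW
    exact ⟨hvU, hvW x0 (Submodule.subset_span (by simp)),
      hvW y0 (Submodule.subset_span (by simp))⟩
  have hU'p : ∀ v ∈ U', p v ∈ U' := by
    intro v hv
    obtain ⟨hvU, h1, h2⟩ := hU'sub v hv
    refine hmemU' _ (hUp v hvU) ?_ ?_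
    · rw [← hp, heig0, real_inner_smul_left, h1, mul_zero]
    · rw [← hp, hpy, real_inner_smul_left, h2, mul_zero]
  have hU'k : ∀ v ∈ U', k v ∈ U' := by
    intro v hv
    obtain ⟨hvU, h1, h2⟩ := hU'sub v hv
    refine hmemU' _ (hUk v hvU) ?_ ?_
    · have := hk x0 v
      rw [show k x0 = y0 from rfl, h2] at this
      linarith
    · have := hk y0 v
      rw [show k y0 = k (k x0) from rfl, hkk, inner_neg_left, h1, neg_zero] at this
      linarith
  obtain ⟨m', x', μ', hm', hx'U, hμ'pos, heig', horth', hkorth'⟩ :=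
    ih (d - 2) (by omega) U' hU'rank hU'p hU'k
  have hx'facts : ∀ j, x' j ∈ U ∧ ⟪x0, x' j⟫ = 0 ∧ ⟪y0, x' j⟫ = 0 :=
    fun j => hU'sub _ (hx'U j)
  have hkx'facts : ∀ j, k (x' j) ∈ U ∧ ⟪x0, k (x' j)⟫ = 0 ∧ ⟪y0, k (x' j)⟫ = 0 :=
    fun j => hU'sub _ (hU'k _ (hx'U j))
  refine ⟨m' + 1, Fin.cons x0 x', Fin.cons μ0 μ', by omega, ?_, ?_, ?_, ?_, ?_⟩
  · intro i
    refine Fin.cases ?_ ?_ i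
    · simpa using hx0U
    · intro j; simpa using (hx'facts j).1
  · intro i
    refine Fin.cases ?_ ?_ i
    · simpa using hμpos
    · intro j; simpa using hμ'pos j
  · intro i
    refine Fin.cases ?_ ?_ i
    · simpa using heig0
    · intro j; simpa using heig' j
  · intro i
    refine Fin.cases ?_ ?_ i <;>
      [skip; intro i'] <;> refine fun j => Fin.cases ?_ ?_ j
    · simpa using hnorm
    · intro j'
      simp [Fin.cons_zero, Fin.cons_succ, (Fin.succ_ne_zero j').symm, (hx'facts j').2.1]
    · have h0 : ⟪x' i', x0⟫ = 0 := by
        rw [real_inner_comm]; exact (hx'facts i').2.1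
      simp [Fin.cons_zero, Fin.cons_succ, Fin.succ_ne_zero i', h0]
    · intro j'
      simpa [Fin.cons_succ, Fin.succ_inj] using horth' i' j'
  · intro i
    refine Fin.cases ?_ ?_ i <;>
      [skip; intro i'] <;> refine fun j => Fin.cases ?_ ?_ j
    · simpa using hxy
    · intro j'
      simpa [Fin.cons_zero, Fin.cons_succ] using (hkx'facts j').2.1
    · simpa [Fin.cons_zero, Fin.cons_succ, real_inner_comm (x' i') y0]
        using (hx'facts i').2.2
    · intro j'
      simpa [Fin.cons_succ] using hkorth' i' j'

theorem euler_decomposition_MtM (n : ℕ)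
    (M : Matrix (Fin n ⊕ Fin n) (Fin n ⊕ Fin n) ℝ) (hM : IsSymplectic M) :
    ∃ (d : Fin n → ℝ) (V : Matrix (Fin n ⊕ Fin n) (Fin n ⊕ Fin n) ℝ),
      (∀ i, 0 < d i) ∧ IsSymplectic V ∧ Vᵀ * V = 1 ∧
      IsSymplectic (Matrix.fromBlocks (Matrix.diagonal d) 0 0 (Matrix.diagonal d)⁻¹ * V) ∧
      Mᵀ * M =
        (Matrix.fromBlocks (Matrix.diagonal d) 0 0 (Matrix.diagonal d)⁻¹ * V)ᵀ *
        (Matrix.fromBlocks (Matrix.diagonal d) 0 0 (Matrix.diagonal d)⁻¹ * V) := by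
  classical
  set Jm : Matrix (Fin n ⊕ Fin n) (Fin n ⊕ Fin n) ℝ := sympJ n with hJm
  set P : Matrix (Fin n ⊕ Fin n) (Fin n ⊕ Fin n) ℝ := Mᵀ * M with hP
  have hPt : Pᵀ = P := by rw [hP, Matrix.transpose_mul, Matrix.transpose_transpose]
  have hMmem : M ∈ Matrix.symplecticGroup (Fin n) ℝ :=
    SymplecticGroup.mem_iff'.mpr hM
  have hdetM : IsUnit M.det := SymplecticGroup.symplectic_det hMmem
  have hPmem : P ∈ Matrix.symplecticGroup (Fin n) ℝ :=
    mul_mem (SymplecticGroup.transpose_mem hMmem) hMmem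
  have hPJP : P * Jm * P = Jm := by
    have h := SymplecticGroup.mem_iff'.mp hPmem
    rwa [hPt] at h
  have hJJ : Jm * Jm = -1 := Matrix.J_squared (Fin n) ℝ
  have hJT : Jmᵀ = -Jm := Matrix.J_transpose (Fin n) ℝ
  have hJtJ : Jmᵀ * Jm = 1 := by rw [hJT, Matrix.neg_mul, hJJ, neg_neg]
  -- operators on Euclidean space
  have hcomp : ∀ (A B : Matrix (Fin n ⊕ Fin n) (Fin n ⊕ Fin n) ℝ)
      (v : EuclideanSpace ℝ (Fin n ⊕ Fin n)),
      Matrix.toEuclideanLin A (Matrix.toEuclideanLin B v) =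
        Matrix.toEuclideanLin (A * B) v := by
    intro A B v
    apply (WithLp.equiv 2 ((Fin n ⊕ Fin n) → ℝ)).injective
    simp [Matrix.ofLp_toEuclideanLin_apply, Matrix.mulVec_mulVec]
  have hinnerR : ∀ (A : Matrix (Fin n ⊕ Fin n) (Fin n ⊕ Fin n) ℝ)
      (u v : EuclideanSpace ℝ (Fin n ⊕ Fin n)),
      ⟪u, Matrix.toEuclideanLin A v⟫ =
        (WithLp.equiv 2 _ u) ⬝ᵥ (A *ᵥ (WithLp.equiv 2 _ v)) := by
    intro A u v
    rw [EuclideanSpace.inner_eq_star_dotProduct, Matrix.ofLp_toEuclideanLin_apply]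
    simp [dotProduct_comm]
  have hinnerL : ∀ (A : Matrix (Fin n ⊕ Fin n) (Fin n ⊕ Fin n) ℝ)
      (u v : EuclideanSpace ℝ (Fin n ⊕ Fin n)),
      ⟪Matrix.toEuclideanLin A u, v⟫ =
        (A *ᵥ (WithLp.equiv 2 _ u)) ⬝ᵥ (WithLp.equiv 2 _ v) := by
    intro A u v
    rw [EuclideanSpace.inner_eq_star_dotProduct, Matrix.ofLp_toEuclideanLin_apply]
    simp [dotProduct_comm]
  have hinner0 : ∀ (u v : EuclideanSpace ℝ (Fin n ⊕ Fin n)),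
      ⟪u, v⟫ = (WithLp.equiv 2 _ u) ⬝ᵥ (WithLp.equiv 2 _ v) := by
    intro u v
    rw [EuclideanSpace.inner_eq_star_dotProduct]
    simp [dotProduct_comm]
  set p := Matrix.toEuclideanLin P with hp_def
  set k := Matrix.toEuclideanLin Jm with hk_def
  have hpsym : ∀ u v : EuclideanSpace ℝ (Fin n ⊕ Fin n), ⟪p u, v⟫ = ⟪u, p v⟫ := by
    intro u v
    rw [hp_def, hinnerL, hinnerR, Matrix.dotProduct_mulVec, ← Matrix.vecMul_transpose, hPt]
  have hppos : ∀ v : EuclideanSpace ℝ (Fin n ⊕ Fin n), v ≠ 0 → 0 < ⟪v, p v⟫ := by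
    intro v hv
    rw [hp_def, hinnerR]
    set v' : (Fin n ⊕ Fin n) → ℝ := WithLp.equiv 2 _ v with hv'
    have hv'ne : v' ≠ 0 := by
      intro h
      apply hv
      apply (WithLp.equiv 2 ((Fin n ⊕ Fin n) → ℝ)).injective
      rw [← hv', h, WithLp.equiv_apply, WithLp.ofLp_zero]
    rw [hP, ← Matrix.mulVec_mulVec, Matrix.dotProduct_mulVec, Matrix.vecMul_transpose]
    set w := M *ᵥ v' with hw
    have hwne : w ≠ 0 := by
      intro h
      apply hv'ne
      have h2 : M⁻¹ *ᵥ w = v' := by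
        rw [hw, Matrix.mulVec_mulVec, Matrix.nonsing_inv_mul _ hdetM, Matrix.one_mulVec]
      rw [← h2, h, Matrix.mulVec_zero]
    obtain ⟨i, hi⟩ := Function.ne_iff.mp hwne
    have hi' : w i ≠ 0 := by simpa using hi
    exact Finset.sum_pos' (fun j _ => mul_self_nonneg _)
      ⟨i, Finset.mem_univ i, mul_self_pos.mpr hi'⟩
  have hkskew : ∀ u v : EuclideanSpace ℝ (Fin n ⊕ Fin n), ⟪k u, v⟫ = -⟪u, k v⟫ := by
    intro u v
    rw [hk_def, hinnerL, hinnerR, ← Matrix.vecMul_transpose, hJT, Matrix.vecMul_neg,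
      neg_dotProduct, Matrix.dotProduct_mulVec]
  have hkk : ∀ v : EuclideanSpace ℝ (Fin n ⊕ Fin n), k (k v) = -v := by
    intro v
    rw [hk_def, hcomp, hJJ]
    apply (WithLp.equiv 2 ((Fin n ⊕ Fin n) → ℝ)).injective
    simp [Matrix.ofLp_toEuclideanLin_apply, Matrix.neg_mulVec, Matrix.one_mulVec]
  have hpkp : ∀ v : EuclideanSpace ℝ (Fin n ⊕ Fin n), p (k (p v)) = k v := by
    intro v
    rw [hp_def, hk_def, hcomp, hcomp, hPJP]
  have hrank : Module.finrank ℝ (⊤ : Submodule ℝ (EuclideanSpace ℝ (Fin n ⊕ Fin n)))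
      = n + n := by
    rw [finrank_top]
    simp [finrank_euclideanSpace]
  obtain ⟨m, x, μ, hm, -, hμpos, heig, horth, hkorth⟩ :=
    euler_aux p k hpsym hppos hkskew hkk hpkp (n + n) ⊤ hrank
      (fun v _ => Submodule.mem_top) (fun v _ => Submodule.mem_top)
  have hmn : m = n := by omega
  subst hmn
  set z : Fin m → (Fin m ⊕ Fin m) → ℝ := fun i => WithLp.equiv 2 _ (x i) with hz
  have hz1 : ∀ i j, z i ⬝ᵥ z j = if i = j then 1 else 0 := by
    intro i j
    have h := horth i j
    rwa [hinner0] at h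
  have hz2 : ∀ i j, z i ⬝ᵥ (Jm *ᵥ z j) = 0 := by
    intro i j
    have h := hkorth i j
    rwa [hk_def, hinnerR] at h
  have hzeig : ∀ i, P *ᵥ z i = μ i • z i := by
    intro i
    have h := congrArg (WithLp.equiv 2 ((Fin m ⊕ Fin m) → ℝ)) (heig i)
    rwa [hp_def, WithLp.equiv_apply, WithLp.equiv_apply, Matrix.ofLp_toEuclideanLin_apply, WithLp.ofLp_smul] at h
  have hJJv : ∀ v : (Fin m ⊕ Fin m) → ℝ, Jm *ᵥ (Jm *ᵥ v) = -v := by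
    intro v
    rw [Matrix.mulVec_mulVec, hJJ, Matrix.neg_mulVec, Matrix.one_mulVec]
  have hzeig2 : ∀ i, P *ᵥ (Jm *ᵥ z i) = (μ i)⁻¹ • (Jm *ᵥ z i) := by
    intro i
    have h1 : P *ᵥ (Jm *ᵥ (P *ᵥ z i)) = Jm *ᵥ z i := by
      rw [Matrix.mulVec_mulVec, Matrix.mulVec_mulVec, hPJP]
    rw [hzeig i, Matrix.mulVec_smul, Matrix.mulVec_smul] at h1
    calc P *ᵥ (Jm *ᵥ z i) = (μ i)⁻¹ • (μ i • (P *ᵥ (Jm *ᵥ z i))) := by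
          rw [smul_smul, inv_mul_cancel₀ (hμpos i).ne', one_smul]
      _ = (μ i)⁻¹ • (Jm *ᵥ z i) := by rw [h1]
  have hzz : ∀ i j, (Jm *ᵥ z i) ⬝ᵥ (Jm *ᵥ z j) = z i ⬝ᵥ z j := by
    intro i j
    rw [Matrix.dotProduct_mulVec, ← Matrix.vecMul_transpose, Matrix.vecMul_vecMul, hJtJ,
      Matrix.vecMul_one]
  have hJzz : ∀ i j, (Jm *ᵥ z i) ⬝ᵥ z j = 0 := by
    intro i j
    rw [dotProduct_comm]
    exact hz2 j i
  -- the orthogonal symplectic matrix V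
  set r : (Fin m ⊕ Fin m) → (Fin m ⊕ Fin m) → ℝ := Sum.elim z (fun i => Jm *ᵥ z i) with hr
  set V : Matrix (Fin m ⊕ Fin m) (Fin m ⊕ Fin m) ℝ := Matrix.of r with hVdef
  have hrl : ∀ i, r (Sum.inl i) = z i := fun i => rfl
  have hrr : ∀ i, r (Sum.inr i) = Jm *ᵥ z i := fun i => rfl
  have hVBVt : ∀ (B : Matrix (Fin m ⊕ Fin m) (Fin m ⊕ Fin m) ℝ) a b,
      (V * B * Vᵀ) a b = r a ⬝ᵥ (B *ᵥ r b) := by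
    intro B a b
    rw [Matrix.mul_assoc]
    simp only [Matrix.mul_apply, Matrix.transpose_apply, dotProduct, Matrix.mulVec,
      hVdef, Matrix.of_apply]
  have hVVt : ∀ a b, (V * Vᵀ) a b = r a ⬝ᵥ r b := by
    intro a b
    simp only [Matrix.mul_apply, Matrix.transpose_apply, dotProduct, hVdef,
      Matrix.of_apply]
  have hV1 : V * Vᵀ = 1 := by
    ext a b
    rw [hVVt]
    rcases a with i | i <;> rcases b with j | j <;>
      simp [hrl, hrr, hz1, hz2, hJzz, hzz, Matrix.one_apply]
  have hVtV : Vᵀ * V = 1 := mul_eq_one_comm.mp hV1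
  have hVJVt : V * Jm * Vᵀ = Jm := by
    ext a b
    rw [hVBVt]
    rcases a with i | i <;> rcases b with j | j
    · rw [hrl, hrl, hz2]
      simp [hJm, sympJ]
    · rw [hrl, hrr, hJJv, dotProduct_neg, hz1]
      simp [hJm, sympJ, Matrix.one_apply]
    · rw [hrr, hrl, hzz, hz1]
      simp [hJm, sympJ, Matrix.one_apply]
    · rw [hrr, hrr, hJJv, dotProduct_neg, hJzz]
      simp [hJm, sympJ]
  have hVsymp : IsSymplectic V := by
    show Vᵀ * Jm * V = Jm
    calc Vᵀ * Jm * V = Vᵀ * (V * Jm * Vᵀ) * V := by rw [hVJVt]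
      _ = (Vᵀ * V) * Jm * (Vᵀ * V) := by simp only [Matrix.mul_assoc]
      _ = Jm := by rw [hVtV, Matrix.one_mul, Matrix.mul_one]
  set Λ : Matrix (Fin m ⊕ Fin m) (Fin m ⊕ Fin m) ℝ :=
    Matrix.fromBlocks (Matrix.diagonal μ) 0 0 (Matrix.diagonal fun i => (μ i)⁻¹) with hΛ
  have hVPVt : V * P * Vᵀ = Λ := by
    ext a b
    rw [hVBVt]
    rcases a with i | i <;> rcases b with j | j
    · rw [hrl, hrl, hzeig j, dotProduct_smul, hz1]
      by_cases hij : i = j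
      · subst hij
        simp [hΛ, Matrix.diagonal_apply]
      · simp [hΛ, Matrix.diagonal_apply, hij]
    · rw [hrl, hrr, hzeig2 j, dotProduct_smul, hz2]
      simp [hΛ]
    · rw [hrr, hrl, hzeig j, dotProduct_smul, hJzz]
      simp [hΛ]
    · rw [hrr, hrr, hzeig2 j, dotProduct_smul, hzz, hz1]
      by_cases hij : i = j
      · subst hij
        simp [hΛ, Matrix.diagonal_apply]
      · simp [hΛ, Matrix.diagonal_apply, hij]
  have hPdecomp : P = Vᵀ * Λ * V := by
    calc P = (Vᵀ * V) * P * (Vᵀ * V) := by rw [hVtV, Matrix.one_mul, Matrix.mul_one]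
      _ = Vᵀ * (V * P * Vᵀ) * V := by simp only [Matrix.mul_assoc]
      _ = Vᵀ * Λ * V := by rw [hVPVt]
  -- the diagonal part
  set d : Fin m → ℝ := fun i => Real.sqrt (μ i) with hd
  have hdpos : ∀ i, 0 < d i := fun i => Real.sqrt_pos.mpr (hμpos i)
  set D : Matrix (Fin m) (Fin m) ℝ := Matrix.diagonal d with hD
  have hDinv : D⁻¹ = Matrix.diagonal fun i => (d i)⁻¹ := by
    apply Matrix.inv_eq_right_inv
    rw [hD, Matrix.diagonal_mul_diagonal]
    have : (fun i => d i * (d i)⁻¹) = fun _ : Fin m => (1 : ℝ) := by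
      funext i
      exact mul_inv_cancel₀ (hdpos i).ne'
    rw [this, Matrix.diagonal_one]
  have hDD : D * D = Matrix.diagonal μ := by
    rw [hD, Matrix.diagonal_mul_diagonal,
      show (fun i => d i * d i) = μ from funext fun i => Real.mul_self_sqrt (hμpos i).le]
  have hDiDi : D⁻¹ * D⁻¹ = Matrix.diagonal fun i => (μ i)⁻¹ := by
    rw [hDinv, Matrix.diagonal_mul_diagonal]
    have hfun : (fun i => (d i)⁻¹ * (d i)⁻¹) = fun i => (μ i)⁻¹ := by
      funext i
      rw [← mul_inv, hd]
      rw [Real.mul_self_sqrt (hμpos i).le]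
    rw [hfun]
  have hDDi : D * D⁻¹ = 1 := by
    rw [hDinv, hD, Matrix.diagonal_mul_diagonal]
    have : (fun i => d i * (d i)⁻¹) = fun _ : Fin m => (1 : ℝ) := by
      funext i
      exact mul_inv_cancel₀ (hdpos i).ne'
    rw [this, Matrix.diagonal_one]
  have hDiD : D⁻¹ * D = 1 := by
    rw [hDinv, hD, Matrix.diagonal_mul_diagonal]
    have : (fun i => (d i)⁻¹ * d i) = fun _ : Fin m => (1 : ℝ) := by
      funext i
      exact inv_mul_cancel₀ (hdpos i).ne'
    rw [this, Matrix.diagonal_one]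
  set A : Matrix (Fin m ⊕ Fin m) (Fin m ⊕ Fin m) ℝ := Matrix.fromBlocks D 0 0 D⁻¹ with hA
  have hAt : Aᵀ = A := by
    rw [hA, hDinv, hD, Matrix.fromBlocks_transpose, Matrix.transpose_zero,
      Matrix.diagonal_transpose, Matrix.diagonal_transpose]
  have hAA : Aᵀ * A = Λ := by
    rw [hAt, hA, Matrix.fromBlocks_multiply, hΛ]
    simp [hDD, hDiDi]
  have hAJA : Aᵀ * Jm * A = Jm := by
    rw [hAt, hA, hJm]
    simp only [sympJ]
    rw [Matrix.fromBlocks_multiply, Matrix.fromBlocks_multiply]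
    simp [Matrix.mul_neg, hDDi, hDiD]
  have hAVsymp : IsSymplectic (A * V) := by
    show (A * V)ᵀ * Jm * (A * V) = Jm
    rw [Matrix.transpose_mul]
    calc Vᵀ * Aᵀ * Jm * (A * V) = Vᵀ * (Aᵀ * Jm * A) * V := by simp only [Matrix.mul_assoc]
      _ = Vᵀ * Jm * V := by rw [hAJA]
      _ = Jm := hVsymp
  refine ⟨d, V, hdpos, hVsymp, hVtV, ?_, ?_⟩
  · exact hAVsymp
  · show P = (A * V)ᵀ * (A * V)
    rw [Matrix.transpose_mul]
    calc P = Vᵀ * Λ * V := hPdecomp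
      _ = Vᵀ * (Aᵀ * A) * V := by rw [hAA]
      _ = Vᵀ * Aᵀ * (A * V) := by simp only [Matrix.mul_assoc]
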